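/- For every W ∈ ℝ^{d_y × d_x}, N ≥ 2, and every Z ∈ ℝ^{d_y × d_x}, one has ⟨A_W(Z), Z⟩_F ≥ 0, where A_W(Z) = ∑_{j=1}^N (W W^T)^{(N-j)/N} Z (W^T W)^{(j-1)/N}. -/

import Mathlib

open Matrix

noncomputable def psdRpow {n : ℕ} {A : Matrix (Fin n) (Fin n) ℝ} (hA : A.IsHermitian) (r : ℝ) :
    Matrix (Fin n) (Fin n) ℝ :=
  (hA.eigenvectorUnitary : Matrix (Fin n) (Fin n) ℝ) *
    Matrix.diagonal (fun i => (hA.eigenvalues i) ^ r) *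
    (star (hA.eigenvectorUnitary : Matrix (Fin n) (Fin n) ℝ))

lemma psdRpow_posSemidef {n : ℕ} {A : Matrix (Fin n) (Fin n) ℝ} (hA : A.PosSemidef) (r : ℝ) :
    (psdRpow hA.1 r).PosSemidef := by
  unfold psdRpow
  apply Matrix.PosSemidef.mul_mul_conjTranspose_same
  refine Matrix.posSemidef_diagonal_iff.mpr fun i => ?_
  exact Real.rpow_nonneg (hA.eigenvalues_nonneg i) r

lemma trace_mul_transpose_self_nonneg {m k : ℕ} (M : Matrix (Fin m) (Fin k) ℝ) :
    0 ≤ Matrix.trace (M * Mᵀ) := by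
  simp only [Matrix.trace, Matrix.diag, Matrix.mul_apply, Matrix.transpose_apply]
  exact Finset.sum_nonneg fun i _ => Finset.sum_nonneg fun j _ => mul_self_nonneg _

open scoped MatrixOrder

lemma trace_psd_sandwich {dy dx : ℕ} {P : Matrix (Fin dy) (Fin dy) ℝ}
    {Q : Matrix (Fin dx) (Fin dx) ℝ} (hP : P.PosSemidef) (hQ : Q.PosSemidef)
    (Z : Matrix (Fin dy) (Fin dx) ℝ) :
    0 ≤ Matrix.trace (P * Z * Q * Zᵀ) := by
  have hS := (CFC.sqrt_nonneg P).posSemidef.1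
  have hT := (CFC.sqrt_nonneg Q).posSemidef.1
  set S := CFC.sqrt P with hSdef
  set T := CFC.sqrt Q with hTdef
  have hSt : Sᵀ = S := by
    rw [← Matrix.conjTranspose_eq_transpose_of_trivial]; exact hS
  have hTt : Tᵀ = T := by
    rw [← Matrix.conjTranspose_eq_transpose_of_trivial]; exact hT
  have key : Matrix.trace (P * Z * Q * Zᵀ) = Matrix.trace ((S * Z * T) * (S * Z * T)ᵀ) := by
    rw [Matrix.transpose_mul, Matrix.transpose_mul, hSt, hTt, ← CFC.sqrt_mul_sqrt_self P hP.nonneg,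
      ← CFC.sqrt_mul_sqrt_self Q hQ.nonneg, ← hSdef, ← hTdef]
    rw [show S * S * Z * (T * T) * Zᵀ = S * (S * (Z * (T * (T * Zᵀ)))) from by
      simp only [Matrix.mul_assoc], Matrix.trace_mul_comm]
    congr 1
    simp only [Matrix.mul_assoc]
  rw [key]
  exact trace_mul_transpose_self_nonneg _

noncomputable def AW {dy dx : ℕ} (N : ℕ) {W : Matrix (Fin dy) (Fin dx) ℝ}
    (h1 : (W * Wᵀ).IsHermitian) (h2 : (Wᵀ * W).IsHermitian)
    (Z : Matrix (Fin dy) (Fin dx) ℝ) : Matrix (Fin dy) (Fin dx) ℝ :=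
  ∑ j ∈ Finset.range N,
    psdRpow h1 (((N : ℝ) - 1 - (j : ℝ)) / (N : ℝ)) * Z * psdRpow h2 ((j : ℝ) / (N : ℝ))

theorem stmt7 {dy dx : ℕ} (N : ℕ) (hN : 2 ≤ N) (W : Matrix (Fin dy) (Fin dx) ℝ)
    (h1 : (W * Wᵀ).IsHermitian) (h2 : (Wᵀ * W).IsHermitian)
    (Z : Matrix (Fin dy) (Fin dx) ℝ) :
    0 ≤ Matrix.trace (AW N h1 h2 Z * Zᵀ) := by
  have hP : (W * Wᵀ).PosSemidef := by
    have := Matrix.posSemidef_self_mul_conjTranspose W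
    rwa [Matrix.conjTranspose_eq_transpose_of_trivial] at this
  have hQ : (Wᵀ * W).PosSemidef := by
    have := Matrix.posSemidef_conjTranspose_mul_self W
    rwa [Matrix.conjTranspose_eq_transpose_of_trivial] at this
  unfold AW
  rw [Matrix.sum_mul, Matrix.trace_sum]
  refine Finset.sum_nonneg fun j _ => ?_
  have e1 : h1 = hP.1 := rfl
  have e2 : h2 = hQ.1 := rfl
  rw [e1, e2]
  exact trace_psd_sandwich (psdRpow_posSemidef hP _) (psdRpow_posSemidef hQ _) Z
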